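/- Let X ∈ ℝ^{n×n} be symmetric negative definite and H ∈ ℝ^{p×n}. If X + Hᵀ H is negative definite, then I_p + H X⁻¹ Hᵀ is symmetric positive definite. -/

import Mathlib

open Matrix

/-- If X is symmetric negative definite and X + Hᵀ H is negative definite, then
I + H X⁻¹ Hᵀ is symmetric positive definite. -/
theorem one_add_HXinvHt_posdef (n p : ℕ)
    (X : Matrix (Fin n) (Fin n) ℝ) (H : Matrix (Fin p) (Fin n) ℝ)
    (hX : X.IsSymm) (hXneg : (-X).PosDef)
    (hneg : (-(X + Hᵀ * H)).PosDef) :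
    (1 + H * X⁻¹ * Hᵀ).IsSymm ∧ (1 + H * X⁻¹ * Hᵀ).PosDef := by
  set Y : Matrix (Fin n) (Fin n) ℝ := -X with hY
  have hYdet : Y.det ≠ 0 := ne_of_gt hXneg.det_pos
  have hXdet : X.det ≠ 0 := by
    intro h
    apply hYdet
    rw [hY, det_neg, h, mul_zero]
  have hXinv : X⁻¹ = -Y⁻¹ := by
    have : Y⁻¹ = -X⁻¹ := by
      apply Matrix.inv_eq_left_inv
      rw [hY, Matrix.neg_mul, Matrix.mul_neg, neg_neg, Matrix.nonsing_inv_mul X (isUnit_iff_ne_zero.mpr hXdet)]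
    rw [this, neg_neg]
  have hXinvSymm : (X⁻¹).IsSymm := by
    rw [Matrix.IsSymm, Matrix.transpose_nonsing_inv, hX.eq]
  have hsymm : (1 + H * X⁻¹ * Hᵀ).IsSymm := by
    rw [Matrix.IsSymm, transpose_add, transpose_one, Matrix.transpose_mul, Matrix.transpose_mul,
      transpose_transpose, hXinvSymm.eq, Matrix.mul_assoc]
  refine ⟨hsymm, ?_⟩
  -- rewrite as 1 - H Y⁻¹ Hᵀ
  have hEq : 1 + H * X⁻¹ * Hᵀ = 1 - H * Y⁻¹ * Hᵀ := by
    rw [hXinv, Matrix.mul_neg, Matrix.neg_mul, sub_eq_add_neg]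
  have hYH : Y.IsHermitian := hXneg.isHermitian
  haveI : Invertible Y := Y.invertibleOfIsUnitDet (isUnit_iff_ne_zero.mpr hYdet)
  have hHH : Hᴴ = Hᵀ := Matrix.conjTranspose_eq_transpose_of_trivial H
  -- Schur complement: the block matrix fromBlocks 1 H Hᵀ Y is PosSemidef
  have hSchur1 : (Y - Hᵀ * (1 : Matrix (Fin p) (Fin p) ℝ)⁻¹ * H).PosSemidef := by
    rw [inv_one, Matrix.mul_one]
    have : Y - Hᵀ * H = -(X + Hᵀ * H) := by rw [hY]; abel
    rw [this]
    exact hneg.posSemidef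
  haveI : Invertible (1 : Matrix (Fin p) (Fin p) ℝ) := invertibleOne
  have hBlock : (fromBlocks (1 : Matrix (Fin p) (Fin p) ℝ) H Hᴴ Y).PosSemidef := by
    rw [Matrix.PosDef.fromBlocks₁₁ H Y Matrix.PosDef.one]
    rw [hHH]
    exact hSchur1
  have hS : ((1 : Matrix (Fin p) (Fin p) ℝ) - H * Y⁻¹ * Hᴴ).PosSemidef := by
    rw [← Matrix.PosDef.fromBlocks₂₂ 1 H hXneg]
    exact hBlock
  rw [hHH] at hS
  -- determinant of 1 - H Y⁻¹ Hᵀ is nonzero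
  have hdetBlock : (fromBlocks (1 : Matrix (Fin p) (Fin p) ℝ) H Hᵀ Y).det =
      (Y - Hᵀ * H).det := by
    rw [Matrix.det_fromBlocks_one₁₁]
  have hdetBlock2 : (fromBlocks (1 : Matrix (Fin p) (Fin p) ℝ) H Hᵀ Y).det =
      Y.det * ((1 : Matrix (Fin p) (Fin p) ℝ) - H * Y⁻¹ * Hᵀ).det := by
    have := Matrix.det_fromBlocks₂₂ (1 : Matrix (Fin p) (Fin p) ℝ) H Hᵀ Y
    rw [this, Matrix.invOf_eq_nonsing_inv]
  have hdetYH : (Y - Hᵀ * H).det ≠ 0 := by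
    have : Y - Hᵀ * H = -(X + Hᵀ * H) := by rw [hY]; abel
    rw [this]
    exact ne_of_gt hneg.det_pos
  have hdetS : ((1 : Matrix (Fin p) (Fin p) ℝ) - H * Y⁻¹ * Hᵀ).det ≠ 0 := by
    intro h
    rw [hdetBlock] at hdetBlock2
    rw [h, mul_zero] at hdetBlock2
    exact hdetYH hdetBlock2
  rw [hEq]
  refine Matrix.PosDef.of_dotProduct_mulVec_pos hS.isHermitian (fun x hx => ?_)
  rcases lt_or_eq_of_le (hS.dotProduct_mulVec_nonneg x) with h | h
  · exact h
  · exfalso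
    apply hx
    apply Matrix.eq_zero_of_mulVec_eq_zero hdetS
    exact (hS.dotProduct_mulVec_zero_iff x).mp h.symm
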